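/- For all natural numbers s ≥ 1, q ≥ 0, and all x: Σ_{n=0}^{q} F_{4sn}(x) = F_{4s}(x) · ( binom(q+1,4)_{F_s(x)} + (-1)^{s+1}·L_{2s}(x)·binom(q+2,4)_{F_s(x)} + binom(q+3,4)_{F_s(x)} ). -/

import Mathlib

/-- Fibonacci polynomials evaluated at a real `x`. -/
def fibP : ℕ → ℝ → ℝ
  | 0, _ => 0
  | 1, _ => 1
  | n + 2, x => x * fibP (n + 1) x + fibP n x

/-- Lucas polynomials evaluated at a real `x`. -/
def lucasP : ℕ → ℝ → ℝ
  | 0, _ => 2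
  | 1, x => x
  | n + 2, x => x * lucasP (n + 1) x + lucasP n x

/-- Numerator of the `s`-Fibopolynomial `binom(m,4)_{F_s(x)}`:
`F_{sm}·F_{s(m-1)}·F_{s(m-2)}·F_{s(m-3)}` (it vanishes for `m < 4`). -/
def sFiboNum4 (s m : ℕ) (x : ℝ) : ℝ :=
  ∏ i ∈ Finset.range 4, fibP (s * (m - i)) x

/-- Denominator of the `s`-Fibopolynomial `binom(m,4)_{F_s(x)}`:
`F_s·F_{2s}·F_{3s}·F_{4s}`. -/
def sFiboDen4 (s : ℕ) (x : ℝ) : ℝ :=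
  ∏ i ∈ Finset.range 4, fibP (s * (i + 1)) x

open Finset

lemma fibP_two (x : ℝ) (n : ℕ) : fibP (n+2) x = x * fibP (n+1) x + fibP n x := rfl

lemma fib_add (x : ℝ) (m n : ℕ) :
    fibP (m+n+1) x = fibP (m+1) x * fibP (n+1) x + fibP m x * fibP n x := by
  induction n using Nat.twoStepInduction with
  | zero => simp [fibP]
  | one =>
    rw [show m + 1 + 1 = m + 2 from rfl, fibP_two]
    simp [fibP]; ring
  | more n ih1 ih2 =>
    rw [show m + (n+2) + 1 = (m + n + 1) + 2 by omega, fibP_two,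
        show m + n + 1 + 1 = m + (n+1) + 1 by omega, ih2, ih1,
        fibP_two x (n+1), fibP_two x n]
    ring

lemma lucasP_two (x : ℝ) (n : ℕ) : lucasP (n+2) x = x * lucasP (n+1) x + lucasP n x := rfl

lemma lucas_fib (x : ℝ) (n : ℕ) : lucasP (n+1) x = fibP (n+2) x + fibP n x := by
  induction n using Nat.twoStepInduction with
  | zero => simp [fibP, lucasP]
  | one => simp [fibP, lucasP]; ring
  | more n ih1 ih2 =>
    rw [show n + 2 + 1 = (n+1) + 2 by omega, lucasP_two, ih2, ih1,
        show n + 2 + 2 = (n+2) + 2 from rfl, fibP_two x (n+2), fibP_two x n]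
    ring

lemma docagne (x : ℝ) (m s : ℕ) :
    fibP (m+s+1) x * fibP s x - fibP (s+1) x * fibP (m+s) x = (-1:ℝ)^(s+1) * fibP m x := by
  induction s with
  | zero => simp [fibP]
  | succ s ih =>
    rw [show m + (s+1) + 1 = (m + s) + 2 by omega, fibP_two, fibP_two x s,
        show m + (s+1) = m + s + 1 by omega]
    rw [pow_succ]
    nlinarith [ih]

lemma cassini (x : ℝ) (n : ℕ) :
    fibP (n+2) x * fibP n x - fibP (n+1) x ^ 2 = (-1:ℝ)^(n+1) := by
  induction n with
  | zero => simp [fibP]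
  | succ n ih =>
    rw [show n + 1 + 2 = (n+1) + 2 by omega, fibP_two x (n+1), pow_succ (-1:ℝ) (n+1)]
    linear_combination (-1:ℝ) * ih - fibP (n+2) x * fibP_two x n

lemma shiftA (x : ℝ) (m t : ℕ) :
    fibP (m + 2*(t+1)) x
      = lucasP (t+1) x * fibP (m+(t+1)) x + (-1:ℝ)^(t+2) * fibP m x := by
  have h1 := fib_add x (m + (t+1)) t
  have h2 := docagne x m (t+1)
  rw [show m + (t+1) + t + 1 = m + 2*(t+1) by omega] at h1
  rw [h1, lucas_fib, show m + (t+1) + 1 = m + t + 2 by omega] at *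
  rw [show t + 1 + 1 = t + 2 from rfl] at h2
  nlinarith [h2]

lemma lucas_two_mul (x : ℝ) (t : ℕ) :
    lucasP (2*(t+1)) x = lucasP (t+1) x ^ 2 - 2 * (-1:ℝ)^(t+1) := by
  have h1 := fib_add x (t+1) (t+1)
  have h2 := fib_add x t t
  have h3 := lucas_fib x (2*t+1)
  have h4 := lucas_fib x t
  have h5 := cassini x t
  rw [show 2*t+1+2 = (t+1)+(t+1)+1 by omega] at h3
  rw [show t+t+1 = 2*t+1 by omega] at h2
  rw [show t+1+1 = t+2 from rfl] at h1
  rw [show 2*(t+1) = 2*t+1+1 by omega, h3, h1, h2, h4]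
  linear_combination (-2:ℝ) * h5

def U (l e : ℝ) : ℕ → ℝ
  | 0 => 0
  | 1 => 1
  | n + 2 => l * U l e (n + 1) + e * U l e n

lemma U_two (l e : ℝ) (n : ℕ) : U l e (n+2) = l * U l e (n+1) + e * U l e n := rfl

lemma fib_mul (x : ℝ) (t : ℕ) (k : ℕ) :
    fibP ((t+1)*k) x = fibP (t+1) x * U (lucasP (t+1) x) ((-1:ℝ)^(t+2)) k := by
  induction k using Nat.twoStepInduction with
  | zero => simp [fibP, U]
  | one => simp [U]
  | more k ih1 ih2 =>
    have h := shiftA x ((t+1)*k) t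
    rw [show (t+1)*k + 2*(t+1) = (t+1)*(k+2) by ring] at h
    rw [show (t+1)*k + (t+1) = (t+1)*(k+1) by ring] at h
    rw [h, ih1, ih2, U_two]
    ring

lemma U_add (l e : ℝ) (m n : ℕ) :
    U l e (m+n+1) = U l e (m+1) * U l e (n+1) + e * U l e m * U l e n := by
  induction n using Nat.twoStepInduction with
  | zero => simp [U]
  | one =>
    rw [show m + 1 + 1 = m + 2 from rfl, U_two]
    simp [U]; ring
  | more n ih1 ih2 =>
    rw [show m + (n+2) + 1 = (m + n + 1) + 2 by omega, U_two,
        show m + n + 1 + 1 = m + (n+1) + 1 by omega, ih2, ih1,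
        U_two l e (n+1), U_two l e n]
    ring

def prodU (l e : ℝ) (m : ℕ) : ℝ := ∏ i ∈ Finset.range 4, U l e (m - i)

set_option maxHeartbeats 2000000 in
lemma key (l e : ℝ) (he : e = 1 ∨ e = -1) (q : ℕ) :
    (U l e 1 * U l e 2 * U l e 3 * U l e 4) * ∑ n ∈ range (q+1), U l e (4*n)
      = U l e 4 *
        (prodU l e (q+1) + e * (l^2 + 2*e) * prodU l e (q+2) + prodU l e (q+3)) := by
  induction q with
  | zero => simp [prodU, Finset.prod_range_succ, U]
  | succ q ih =>
    rw [Finset.sum_range_succ, mul_add, ih]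
    match q with
    | 0 => rcases he with rfl | rfl <;> (simp [prodU, Finset.prod_range_succ, U]; ring)
    | 1 => rcases he with rfl | rfl <;> (simp [prodU, Finset.prod_range_succ, U]; ring)
    | 2 => rcases he with rfl | rfl <;> (simp [prodU, Finset.prod_range_succ, U]; ring)
    | (r+3) =>
      rw [show 4*(r+3+1) = 2*r+8 + (2*r+7) + 1 by ring, U_add l e (2*r+8) (2*r+7),
          show 2*r+8+1 = (r+4) + (r+4) + 1 by ring, U_add l e (r+4) (r+4),
          show 2*r+7+1 = (r+4) + (r+3) + 1 by ring, U_add l e (r+4) (r+3),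
          show 2*r+7 = (r+3) + (r+3) + 1 by ring, U_add l e (r+3) (r+3)]
      rcases he with rfl | rfl <;> (simp [prodU, Finset.prod_range_succ, U]; ring)

set_option maxHeartbeats 1000000 in
/-- Identity (3.18), stated after clearing the denominator
`F_s(x)·F_{2s}(x)·F_{3s}(x)·F_{4s}(x)` of the s-Fibopolynomials `binom(·,4)_{F_s(x)}`. -/
theorem stmt_19 (s q : ℕ) (hs : 1 ≤ s) (x : ℝ) :
    sFiboDen4 s x * ∑ n ∈ Finset.range (q + 1), fibP (4 * s * n) x =
      fibP (4 * s) x *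
        (sFiboNum4 s (q + 1) x + (-1 : ℝ) ^ (s + 1) * lucasP (2 * s) x * sFiboNum4 s (q + 2) x +
          sFiboNum4 s (q + 3) x) := by
  obtain ⟨t, rfl⟩ : ∃ t, s = t + 1 := ⟨s - 1, by omega⟩
  set l : ℝ := lucasP (t+1) x with hl
  set F : ℝ := fibP (t+1) x with hF
  set e : ℝ := (-1:ℝ)^(t+2) with heq
  have he : e = 1 ∨ e = -1 := by
    rcases Nat.even_or_odd (t+2) with h | h
    · exact Or.inl (by rw [heq, h.neg_one_pow])
    · exact Or.inr (by rw [heq, h.neg_one_pow])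
  have hU : ∀ k, fibP ((t+1)*k) x = F * U l e k := fib_mul x t
  have hden : sFiboDen4 (t+1) x
      = (F * U l e 1) * (F * U l e 2) * (F * U l e 3) * (F * U l e 4) := by
    simp [sFiboDen4, Finset.prod_range_succ, hU]
  have hnum : ∀ m, sFiboNum4 (t+1) m x
      = F^4 * prodU l e m := by
    intro m
    simp [sFiboNum4, prodU, Finset.prod_range_succ, hU]
    ring
  have hsum : ∑ n ∈ Finset.range (q + 1), fibP (4 * (t+1) * n) x
      = F * ∑ n ∈ Finset.range (q + 1), U l e (4*n) := by
    rw [Finset.mul_sum]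
    refine Finset.sum_congr rfl fun n _ => ?_
    rw [show 4 * (t+1) * n = (t+1) * (4*n) by ring, hU]
  have h4 : fibP (4 * (t+1)) x = F * U l e 4 := by
    rw [show 4 * (t+1) = (t+1) * 4 by ring, hU]
  have hL : lucasP (2 * (t+1)) x = l^2 + 2*e := by
    rw [lucas_two_mul x t, heq, hl]
    ring
  rw [hden, hsum, h4, hL, hnum, hnum, hnum]
  have K := key l e he q
  linear_combination (F^5) * K
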